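/- Let p be a prime with p ≥ 3 and P = p#. The number of x ∈ ℤ/Pℤ such that x and x + 4 are both units of ℤ/Pℤ but x + 2 is not a unit equals the product over primes q with 3 ≤ q ≤ p of (q − 2). (This is K(4, P), the number of gaps of length 4 in U(P).) -/

import Mathlib

open Finset

private lemma pi_isUnit_iff {ι : Type*} {M : ι → Type*} [∀ i, Monoid (M i)] {f : ∀ i, M i} :
    IsUnit f ↔ ∀ i, IsUnit (f i) := by
  constructor
  · rintro ⟨u, rfl⟩ i
    exact ⟨⟨u.val i, u.inv i, congrFun u.val_inv i, congrFun u.inv_val i⟩, rfl⟩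
  · intro h
    exact ⟨⟨f, fun i => ((h i).unit⁻¹ : _), funext fun i => (h i).mul_val_inv,
      funext fun i => (h i).val_inv_mul⟩, rfl⟩

private lemma count_prime (q : ℕ) (hq : q.Prime) :
    Nat.card {y : ZMod q // y ≠ 0 ∧ y + 4 ≠ 0} = if 3 ≤ q then q - 2 else 1 := by
  haveI : Fact q.Prime := ⟨hq⟩
  rw [Nat.card_eq_fintype_card, Fintype.card_subtype]
  by_cases h3 : 3 ≤ q
  · rw [if_pos h3]
    have hd : ¬ (q ∣ 4) := by
      intro hd
      have := Nat.le_of_dvd (by norm_num) hd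
      interval_cases q
      · exact absurd hd (by decide)
      · exact absurd hq (by decide)
    have h4 : (4 : ZMod q) ≠ 0 := by
      intro h
      apply hd
      rwa [show (4:ZMod q) = ((4:ℕ):ZMod q) by push_cast; ring,
        ZMod.natCast_eq_zero_iff] at h
    have key : (univ.filter fun y : ZMod q => y ≠ 0 ∧ y + 4 ≠ 0) = univ \ {0, -4} := by
      ext y
      simp only [mem_filter, mem_univ, true_and, mem_sdiff, mem_insert, mem_singleton, not_or]
      constructor
      · rintro ⟨h1, h2⟩
        exact ⟨h1, fun h => h2 (by rw [h]; ring)⟩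
      · rintro ⟨h1, h2⟩
        exact ⟨h1, fun h => h2 (by linear_combination h)⟩
    rw [key, card_sdiff_of_subset (by simp)]
    have : ({0, -4} : Finset (ZMod q)).card = 2 := by
      rw [card_insert_of_notMem, card_singleton]
      simp only [mem_singleton]
      intro h
      exact h4 (by linear_combination h)
    rw [this, card_univ, ZMod.card]
  · rw [if_neg h3]
    have hq2 : q = 2 := by have := hq.two_le; omega
    subst hq2
    rfl

private lemma aux3 {P : ℕ} (h3 : 3 ∣ P) {x : ZMod P} (hx : IsUnit x) (hx4 : IsUnit (x + 4)) :
    ¬ IsUnit (x + 2) := by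
  intro h2
  have key : ∀ a : ZMod 3, a ≠ 0 → a + 4 ≠ 0 → a + 2 ≠ 0 → False := by decide
  haveI : Fact (Nat.Prime 3) := ⟨by norm_num⟩
  set f := ZMod.castHom h3 (ZMod 3) with hf
  have u0 := hx.map f
  have u4 := hx4.map f
  have u2 := h2.map f
  rw [map_add, map_ofNat] at u4 u2
  rw [isUnit_iff_ne_zero] at u0 u4 u2
  exact key (f x) u0 u4 u2

theorem K4_formula (p : ℕ) (hp : p.Prime) (hp3 : 3 ≤ p) (P : ℕ) (hP : P = primorial p) :
    Nat.card {x : ZMod P // IsUnit x ∧ IsUnit (x + 4) ∧ ¬IsUnit (x + 2)} =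
      ∏ q ∈ (Finset.range (p + 1)).filter (fun q => q.Prime ∧ 3 ≤ q), (q - 2) := by
  classical
  set s : Finset ℕ := (Finset.range (p + 1)).filter Nat.Prime with hs
  have h3s : 3 ∈ s := by
    simp only [hs, mem_filter, mem_range]
    exact ⟨by omega, by norm_num⟩
  have h3P : 3 ∣ P := by
    rw [hP, primorial]
    exact Finset.dvd_prod_of_mem _ h3s
  -- drop the redundant third condition
  have step1 : Nat.card {x : ZMod P // IsUnit x ∧ IsUnit (x + 4) ∧ ¬IsUnit (x + 2)} =
      Nat.card {x : ZMod P // IsUnit x ∧ IsUnit (x + 4)} := by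
    apply Nat.card_congr
    apply Equiv.subtypeEquivRight
    intro x
    constructor
    · rintro ⟨h1, h2, _⟩; exact ⟨h1, h2⟩
    · rintro ⟨h1, h2⟩; exact ⟨h1, h2, aux3 h3P h1 h2⟩
  rw [step1]
  -- CRT
  have hprime : ∀ i : s, Nat.Prime (i : ℕ) := fun i => (mem_filter.mp i.2).2
  haveI : ∀ i : s, Fact (Nat.Prime (i : ℕ)) := fun i => ⟨hprime i⟩
  have hco : Pairwise (Function.onFun Nat.Coprime fun i : s => (i : ℕ)) := by
    intro i j hij
    exact (Nat.coprime_primes (hprime i) (hprime j)).mpr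
      (fun h => hij (Subtype.ext h))
  have hprod : P = ∏ i : s, (i : ℕ) := by
    rw [hP, primorial]
    exact (Finset.prod_coe_sort s (fun q => q)).symm
  rw [hprod]
  set e := ZMod.prodEquivPi (fun i : s => (i : ℕ)) hco with he
  have hxiff : ∀ x : ZMod (∏ i : s, (i : ℕ)),
      (IsUnit x ∧ IsUnit (x + 4)) ↔ ∀ i : s, (e x i ≠ 0 ∧ e x i + 4 ≠ 0) := by
    intro x
    have hu : ∀ y : ZMod (∏ i : s, (i : ℕ)), IsUnit y ↔ IsUnit (e y) := by
      intro y
      constructor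
      · exact fun h => h.map e.toRingHom
      · intro h
        have := h.map e.symm.toRingHom
        convert this using 1
        exact (e.symm_apply_apply y).symm
    rw [hu x, hu (x + 4), map_add, map_ofNat, pi_isUnit_iff, pi_isUnit_iff, ← forall_and]
    apply forall_congr'
    intro i
    rw [isUnit_iff_ne_zero, isUnit_iff_ne_zero, Pi.add_apply]
    have : (4 : ∀ i : s, ZMod (i:ℕ)) i = 4 := rfl
    rw [this]
  have step2 : Nat.card {x : ZMod (∏ i : s, (i : ℕ)) // IsUnit x ∧ IsUnit (x + 4)} =
      ∏ i : s, Nat.card {y : ZMod (i : ℕ) // y ≠ 0 ∧ y + 4 ≠ 0} :=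
    calc Nat.card {x : ZMod (∏ i : s, (i : ℕ)) // IsUnit x ∧ IsUnit (x + 4)}
        = Nat.card {f : ∀ i : s, ZMod (i : ℕ) // ∀ i : s, f i ≠ 0 ∧ f i + 4 ≠ 0} :=
          Nat.card_congr (e.toEquiv.subtypeEquiv
            (q := fun f => ∀ i : s, f i ≠ 0 ∧ f i + 4 ≠ 0) hxiff)
      _ = Nat.card (∀ i : s, {y : ZMod (i : ℕ) // y ≠ 0 ∧ y + 4 ≠ 0}) :=
          Nat.card_congr (Equiv.subtypePiEquivPi
            (p := fun (i : s) (y : ZMod (i : ℕ)) => y ≠ 0 ∧ y + 4 ≠ 0))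
      _ = ∏ i : s, Nat.card {y : ZMod (i : ℕ) // y ≠ 0 ∧ y + 4 ≠ 0} := Nat.card_pi
  rw [step2]
  have step3 : ∀ i : s, Nat.card {y : ZMod (i : ℕ) // y ≠ 0 ∧ y + 4 ≠ 0} =
      if 3 ≤ (i : ℕ) then (i : ℕ) - 2 else 1 := fun i => count_prime _ (hprime i)
  rw [Finset.prod_congr rfl (fun i _ => step3 i), Finset.prod_coe_sort s
    (fun q => if 3 ≤ q then q - 2 else 1), ← Finset.prod_filter,
    Finset.filter_filter]
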